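/- arXiv:2308.01456 — 3 statements merged into one kernel-verified Lean document; each statement's English description precedes it below -/
import Mathlib

section
/- Let (G, γ, b) be an RES-graph, let γ' be a shifting of γ, and let X ⊆ V(G) with b ∈ X. Then the flooding number ν̃(G, γ, b) is at most γ'(E(X)) + |δ(X)|/2 − odd_{γ'}(G − X). -/
open scoped Classical

namespace SignedFlood

variable {V E : Type} [Fintype V] [DecidableEq V] [Fintype E] [DecidableEq E]

/-- A circuit (closed trail) in a multigraph specified by `ends : E → Sym2 V`.
Darts are triples `(e, u, v)` meaning edge `e` traversed from `u` to `v`. -/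
structure Circuit {V E : Type} (ends : E → Sym2 V) where
  darts : List (E × V × V)
  nonempty : darts ≠ []
  valid : ∀ d ∈ darts, ends d.1 = s(d.2.1, d.2.2)
  chain : darts.Chain' (fun d d' => d.2.2 = d'.2.1)
  closed : darts.head?.map (fun d => d.2.1) = darts.getLast?.map (fun d => d.2.2)
  edgesNodup : (darts.map Prod.fst).Nodup

namespace Circuit

variable {ends : E → Sym2 V}

/-- The set of edges used by a circuit. -/
def edges (C : Circuit ends) : Finset E := (C.darts.map Prod.fst).toFinset

/-- The weight of a circuit: the sum in `ZMod 2` of the weights of its edges. -/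
def weight (γ : E → ZMod 2) (C : Circuit ends) : ZMod 2 :=
  ((C.darts.map Prod.fst).map γ).sum

/-- A circuit hits `b` if it has an edge (dart) incident to `b`. -/
def Hits (C : Circuit ends) (b : V) : Prop :=
  ∃ d ∈ C.darts, d.2.1 = b ∨ d.2.2 = b

/-- A circuit has `b` as its tail and head. -/
def BasedAt (C : Circuit ends) (b : V) : Prop :=
  C.darts.head?.map (fun d => d.2.1) = some b

end Circuit

/-- Degree of a vertex: loops count twice. -/
noncomputable def degree (ends : E → Sym2 V) (v : V) : ℕ :=
  ∑ e : E, (if ends e = s(v, v) then 2 else if v ∈ ends e then 1 else 0)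

/-- Adjacency via some edge. -/
def Adj (ends : E → Sym2 V) (u v : V) : Prop := ∃ e, ends e = s(u, v)

/-- The multigraph is connected. -/
def Connected (ends : E → Sym2 V) : Prop :=
  ∀ u v : V, Relation.ReflTransGen (Adj ends) u v

/-- Eulerian: connected with all degrees even. -/
def IsEulerian (ends : E → Sym2 V) : Prop :=
  Connected ends ∧ ∀ v : V, Even (degree ends v)

/-- A family of circuits whose edge sets partition the edge set. -/
def IsDecomposition (ends : E → Sym2 V) {k : ℕ} (C : Fin k → Circuit ends) : Prop :=
  ∀ e : E, ∃! i : Fin k, e ∈ (C i).edges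

/-- The flooding number: the maximum size of a circuit-decomposition where each
circuit is non-zero and hits `b` (`0` if there is no such decomposition). -/
noncomputable def floodingNumber (ends : E → Sym2 V) (γ : E → ZMod 2) (b : V) : ℕ :=
  sSup {k : ℕ | ∃ C : Fin k → Circuit ends, IsDecomposition ends C ∧
    ∀ i, (C i).weight γ = 1 ∧ (C i).Hits b}

/-- Shift a signature at a vertex `v`: add `1` to every non-loop edge incident to `v`. -/
noncomputable def shiftAt (ends : E → Sym2 V) (γ : E → ZMod 2) (v : V) : E → ZMod 2 :=
  fun e => γ e + (if v ∈ ends e ∧ ends e ≠ s(v, v) then 1 else 0)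

/-- `γ'` is a shifting of `γ`: obtained by a sequence of shifts at vertices. -/
noncomputable def IsShifting (ends : E → Sym2 V) (γ γ' : E → ZMod 2) : Prop :=
  ∃ l : List V, γ' = l.foldl (shiftAt ends) γ

/-- A pair crosses `X` if it has exactly one member in `X`. -/
def Crossing (X : Set V) (p : Sym2 V) : Prop :=
  ∃ u v, p = s(u, v) ∧ u ∈ X ∧ v ∉ X

/-- `δ(X)`: edges with exactly one end in `X`. -/
noncomputable def cutEdges (ends : E → Sym2 V) (X : Set V) : Finset E :=
  Finset.univ.filter (fun e => Crossing X (ends e))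

/-- `E(X)`: edges with both ends in `X`. -/
noncomputable def insideEdges (ends : E → Sym2 V) (X : Set V) : Finset E :=
  Finset.univ.filter (fun e => ∀ v ∈ ends e, v ∈ X)

/-- `E(Y) ∪ δ(Y)`: edges with at least one end in `Y`. -/
noncomputable def incidentEdges (ends : E → Sym2 V) (Y : Set V) : Finset E :=
  Finset.univ.filter (fun e => ∃ v ∈ ends e, v ∈ Y)

/-- The number of non-zero edges in `F` according to `γ`. -/
noncomputable def nzCount (γ : E → ZMod 2) (F : Finset E) : ℕ :=
  (F.filter (fun e => γ e = 1)).card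

/-- `Y` is `γ`-odd: parity of `γ(E(Y) ∪ δ(Y))` differs from parity of `|δ(Y)|/2`. -/
def OddSet (ends : E → Sym2 V) (γ : E → ZMod 2) (Y : Set V) : Prop :=
  nzCount γ (incidentEdges ends Y) % 2 ≠ ((cutEdges ends Y).card / 2) % 2

/-- The vertex set of the component of `G - X` containing `y`. -/
def compOf (ends : E → Sym2 V) (X : Set V) (y : V) : Set V :=
  {z | Relation.ReflTransGen
    (fun a c => (∃ e, ends e = s(a, c)) ∧ a ∉ X ∧ c ∉ X) y z}

/-- `Y` is the vertex set of a component of `G - X`. -/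
def IsCompOf (ends : E → Sym2 V) (X : Set V) (Y : Set V) : Prop :=
  ∃ y, y ∉ X ∧ Y = compOf ends X y

/-- The number of `γ`-odd components of `G - X`. -/
noncomputable def oddComponents (ends : E → Sym2 V) (γ : E → ZMod 2) (X : Set V) : ℕ :=
  Set.ncard {Y : Set V | IsCompOf ends X Y ∧ OddSet ends γ Y}

/-- A flooding: a circuit-decomposition into `deg(b)/2` circuits, each with `b`
as tail and head. -/
def IsFlooding (ends : E → Sym2 V) (b : V) {k : ℕ} (C : Fin k → Circuit ends) : Prop :=
  k = degree ends b / 2 ∧ IsDecomposition ends C ∧ ∀ i, (C i).BasedAt b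

/-- The number of non-zero circuits in a family of circuits. -/
noncomputable def nonzeroCount (ends : E → Sym2 V) (γ : E → ZMod 2) {k : ℕ}
    (C : Fin k → Circuit ends) : ℕ :=
  (Finset.univ.filter (fun i : Fin k => (C i).weight γ = 1)).card

/-- An optimal flooding maximizes the number of non-zero circuits. -/
def IsOptimalFlooding (ends : E → Sym2 V) (γ : E → ZMod 2) (b : V) {k : ℕ}
    (C : Fin k → Circuit ends) : Prop :=
  IsFlooding ends b C ∧ ∀ (k' : ℕ) (C' : Fin k' → Circuit ends),
    IsFlooding ends b C' → nonzeroCount ends γ C' ≤ nonzeroCount ends γ C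


/-! ### Auxiliary development for the proof -/

section Aux

variable {ends : E → Sym2 V}

private lemma sym2_exists_rep (p : Sym2 V) : ∃ u v, p = s(u, v) := by
  induction p using Sym2.ind with | _ u v => exact ⟨u, v, rfl⟩

private lemma crossing_mk_iff (S : Set V) (u v : V) :
    Crossing S (s(u, v)) ↔ (u ∈ S ∧ v ∉ S) ∨ (v ∈ S ∧ u ∉ S) := by
  constructor
  · rintro ⟨a, c, heq, ha, hc⟩
    rw [Sym2.eq_iff] at heq
    rcases heq with ⟨rfl, rfl⟩ | ⟨rfl, rfl⟩
    · exact Or.inl ⟨ha, hc⟩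
    · exact Or.inr ⟨ha, hc⟩
  · rintro (⟨hu, hv⟩ | ⟨hv, hu⟩)
    · exact ⟨u, v, rfl, hu, hv⟩
    · exact ⟨v, u, Sym2.eq_swap, hv, hu⟩

private lemma mem_cutEdges {S : Set V} {e : E} :
    e ∈ cutEdges ends S ↔ Crossing S (ends e) := by simp [cutEdges]

private lemma mem_insideEdges {X : Set V} {e : E} :
    e ∈ insideEdges ends X ↔ ∀ v ∈ ends e, v ∈ X := by simp [insideEdges]

private lemma mem_incidentEdges {Y : Set V} {e : E} :
    e ∈ incidentEdges ends Y ↔ ∃ v ∈ ends e, v ∈ Y := by simp [incidentEdges]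

private lemma zmod2_cases : ∀ x : ZMod 2, x = 0 ∨ x = 1 := by decide

private lemma even_iff_zmod2 (n : ℕ) : Even n ↔ (n : ZMod 2) = 0 := by
  rw [even_iff_two_dvd, ← ZMod.natCast_eq_zero_iff]

private lemma not_even_iff_zmod2 (n : ℕ) : ¬ Even n ↔ (n : ZMod 2) = 1 := by
  rw [even_iff_zmod2]
  rcases zmod2_cases (n : ZMod 2) with h | h <;> simp [h]

/-! #### List lemmas for circuits -/

private lemma sum_ite_list {α : Type} (P : α → Prop) [DecidablePred P] :
    ∀ l : List α, (l.map (fun a => if P a then (1 : ZMod 2) else 0)).sum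
      = ((l.filter (fun a => decide (P a))).length : ZMod 2)
  | [] => by simp
  | a :: l => by
    by_cases h : P a <;>
      simp [List.filter_cons, h, sum_ite_list P l, add_comm]

private lemma chain_sum (f : V → ZMod 2) :
    ∀ (l : List (E × V × V)) (hl : l ≠ []),
      l.Chain' (fun d d' => d.2.2 = d'.2.1) →
      (l.map (fun d => f d.2.1 + f d.2.2)).sum = f ((l.head hl).2.1) + f ((l.getLast hl).2.2)
  | [], hl, _ => absurd rfl hl
  | [d], _, _ => by simp
  | d :: d' :: r, _, h => by
    obtain ⟨h1, h2⟩ := List.isChain_cons_cons.mp h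
    have ih := chain_sum f (d' :: r) (by simp) h2
    simp only [List.map_cons, List.sum_cons] at ih ⊢
    rw [List.head_cons, List.getLast_cons (by simp : d' :: r ≠ [])]
    rw [ih, List.head_cons, h1]
    linear_combination CharTwo.add_self_eq_zero (f d'.2.1)

private lemma circuit_pair_sum (C : Circuit ends) (f : V → ZMod 2) :
    (C.darts.map (fun d => f d.2.1 + f d.2.2)).sum = 0 := by
  have hne := C.nonempty
  have h := chain_sum f C.darts hne C.chain
  have hcl := C.closed
  rw [List.head?_eq_head hne, List.getLast?_eq_getLast hne] at hcl
  simp only [Option.map_some] at hcl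
  injection hcl with hcl
  rw [h, ← hcl, CharTwo.add_self_eq_zero]

private lemma circuit_cross_card (C : Circuit ends) (S : Set V) :
    (((C.edges ∩ cutEdges ends S)).card : ZMod 2) = 0 := by
  classical
  have h1 : C.edges ∩ cutEdges ends S
      = ((C.darts.map Prod.fst).filter (fun e => decide (Crossing S (ends e)))).toFinset := by
    rw [List.toFinset_filter]
    ext e
    simp [Circuit.edges, cutEdges, and_comm]
  rw [h1, List.toFinset_card_of_nodup (C.edgesNodup.filter _)]
  rw [List.filter_map]
  rw [List.length_map]
  have h2 : ((List.filter (fun d => decide (Crossing S (ends d.1))) C.darts).length : ZMod 2)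
      = (C.darts.map (fun d => if Crossing S (ends d.1) then (1 : ZMod 2) else 0)).sum := by
    rw [sum_ite_list (fun d : E × V × V => Crossing S (ends d.1)) C.darts]
  rw [show (List.filter ((fun e => decide (Crossing S (ends e))) ∘ Prod.fst) C.darts)
      = (List.filter (fun d => decide (Crossing S (ends d.1))) C.darts) from rfl]
  rw [h2]
  have h3 : (C.darts.map (fun d => if Crossing S (ends d.1) then (1 : ZMod 2) else 0))
      = (C.darts.map (fun d => (if d.2.1 ∈ S then (1 : ZMod 2) else 0)
          + (if d.2.2 ∈ S then (1 : ZMod 2) else 0))) := by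
    refine List.map_congr_left fun d hd => ?_
    rw [C.valid d hd, crossing_mk_iff]
    by_cases ht : d.2.1 ∈ S <;> by_cases hh : d.2.2 ∈ S <;> simp [ht, hh] <;> decide
  rw [h3, circuit_pair_sum C (fun v => if v ∈ S then (1 : ZMod 2) else 0)]

private lemma circuit_cross_even (C : Circuit ends) (S : Set V) :
    2 ∣ (C.edges ∩ cutEdges ends S).card :=
  (ZMod.natCast_eq_zero_iff _ 2).mp (circuit_cross_card C S)

private lemma weight_eq_sum (C : Circuit ends) (γ : E → ZMod 2) :
    C.weight γ = ∑ e ∈ C.edges, γ e := by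
  rw [Circuit.weight, Circuit.edges, List.sum_toFinset _ C.edgesNodup]

private lemma nzCount_cast (γ : E → ZMod 2) (F : Finset E) :
    ((nzCount γ F : ZMod 2)) = ∑ e ∈ F, γ e := by
  classical
  rw [nzCount, Finset.card_filter]
  push_cast
  refine Finset.sum_congr rfl fun e _ => ?_
  rcases zmod2_cases (γ e) with h | h <;> simp [h]

private lemma crossing_singleton_iff (v : V) (p : Sym2 V) :
    (v ∈ p ∧ p ≠ s(v, v)) ↔ Crossing {v} p := by
  obtain ⟨u, w, rfl⟩ := sym2_exists_rep p
  rw [Sym2.mem_iff, crossing_mk_iff]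
  constructor
  · rintro ⟨(rfl | rfl), hne⟩
    · exact Or.inl ⟨rfl, fun h => hne (by rw [Set.mem_singleton_iff] at h; rw [h])⟩
    · exact Or.inr ⟨rfl, fun h => hne (by rw [Set.mem_singleton_iff] at h; rw [h])⟩
  · rintro (⟨h1, h2⟩ | ⟨h1, h2⟩)
    · rw [Set.mem_singleton_iff] at h1
      refine ⟨Or.inl h1.symm, fun h => ?_⟩
      rw [Sym2.eq_iff] at h
      rcases h with ⟨rfl, rfl⟩ | ⟨rfl, rfl⟩ <;> exact h2 rfl
    · rw [Set.mem_singleton_iff] at h1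
      refine ⟨Or.inr h1.symm, fun h => ?_⟩
      rw [Sym2.eq_iff] at h
      rcases h with ⟨rfl, rfl⟩ | ⟨rfl, rfl⟩ <;> exact h2 rfl

private lemma weight_shiftAt (C : Circuit ends) (γ : E → ZMod 2) (v : V) :
    C.weight (shiftAt ends γ v) = C.weight γ := by
  classical
  rw [weight_eq_sum, weight_eq_sum]
  simp only [shiftAt]
  rw [Finset.sum_add_distrib]
  have h1 : ∑ e ∈ C.edges, (if v ∈ ends e ∧ ends e ≠ s(v, v) then (1 : ZMod 2) else 0)
      = ((C.edges.filter (fun e => v ∈ ends e ∧ ends e ≠ s(v, v))).card : ZMod 2) := by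
    rw [Finset.card_filter]; push_cast; rfl
  have h2 : C.edges.filter (fun e => v ∈ ends e ∧ ends e ≠ s(v, v))
      = C.edges ∩ cutEdges ends {v} := by
    ext e
    simp only [Finset.mem_filter, Finset.mem_inter, mem_cutEdges,
      crossing_singleton_iff v (ends e)]
  rw [h1, h2, circuit_cross_card C {v}, add_zero]

private lemma weight_shifting (C : Circuit ends) {γ γ' : E → ZMod 2}
    (h : IsShifting ends γ γ') : C.weight γ' = C.weight γ := by
  obtain ⟨l, rfl⟩ := h
  induction l generalizing γ with
  | nil => rfl
  | cons v l ih => rw [List.foldl_cons, ih (γ := shiftAt ends γ v), weight_shiftAt]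

/-! #### Components of `G - X` -/

section Comp

variable {X : Set V}

private lemma mem_compOf_self (y : V) : y ∈ compOf ends X y := Relation.ReflTransGen.refl

private lemma compOf_subset_notX {y z : V} (hy : y ∉ X) (hz : z ∈ compOf ends X y) : z ∉ X := by
  rcases Relation.ReflTransGen.cases_tail hz with h | ⟨c, _, hr⟩
  · rw [h]; exact hy
  · exact hr.2.2

private lemma compRel_symm :
    Symmetric (fun a c : V => (∃ e, ends e = s(a, c)) ∧ a ∉ X ∧ c ∉ X) := by
  rintro a c ⟨⟨e, he⟩, ha, hc⟩
  exact ⟨⟨e, he.trans Sym2.eq_swap⟩, hc, ha⟩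

private lemma compOf_eq_of_mem {y z : V} (hz : z ∈ compOf ends X y) :
    compOf ends X z = compOf ends X y := by
  have hsym : Symmetric (Relation.ReflTransGen
      (fun a c : V => (∃ e, ends e = s(a, c)) ∧ a ∉ X ∧ c ∉ X)) := by
    haveI : Std.Symm (fun a c : V => (∃ e, ends e = s(a, c)) ∧ a ∉ X ∧ c ∉ X) :=
      ⟨fun a c h => compRel_symm (ends := ends) (X := X) h⟩
    exact fun a c h => Std.Symm.symm _ _ h
  ext w
  constructor
  · intro hw; exact Relation.ReflTransGen.trans hz hw
  · intro hw; exact Relation.ReflTransGen.trans (hsym hz) hw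

private lemma IsCompOf.not_mem_X {Y : Set V} (h : IsCompOf ends X Y) {v : V} (hv : v ∈ Y) :
    v ∉ X := by
  obtain ⟨y, hy, rfl⟩ := h; exact compOf_subset_notX hy hv

private lemma IsCompOf.eq_compOf {Y : Set V} (h : IsCompOf ends X Y) {v : V} (hv : v ∈ Y) :
    Y = compOf ends X v := by
  obtain ⟨y, hy, rfl⟩ := h; exact (compOf_eq_of_mem hv).symm

private lemma isCompOf_compOf {y : V} (hy : y ∉ X) : IsCompOf ends X (compOf ends X y) :=
  ⟨y, hy, rfl⟩

private lemma edge_step {e : E} {a c : V} (he : ends e = s(a, c)) (ha : a ∉ X)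
    (hc : c ∉ X) : c ∈ compOf ends X a :=
  Relation.ReflTransGen.single ⟨⟨e, he⟩, ha, hc⟩

private lemma comp_unique {Y₁ Y₂ : Set V} (h₁ : IsCompOf ends X Y₁) (h₂ : IsCompOf ends X Y₂)
    {e : E} (he₁ : e ∈ incidentEdges ends Y₁) (he₂ : e ∈ incidentEdges ends Y₂) : Y₁ = Y₂ := by
  rw [mem_incidentEdges] at he₁ he₂
  obtain ⟨v₁, hv₁e, hv₁⟩ := he₁
  obtain ⟨v₂, hv₂e, hv₂⟩ := he₂
  obtain ⟨a, c, hac⟩ := sym2_exists_rep (ends e)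
  rw [h₁.eq_compOf hv₁, h₂.eq_compOf hv₂]
  have hX₁ := h₁.not_mem_X hv₁
  have hX₂ := h₂.not_mem_X hv₂
  rw [hac, Sym2.mem_iff] at hv₁e hv₂e
  rcases hv₁e with rfl | rfl <;> rcases hv₂e with rfl | rfl
  · rfl
  · exact (compOf_eq_of_mem (edge_step hac hX₁ hX₂)).symm
  · exact compOf_eq_of_mem (edge_step hac hX₂ hX₁)
  · rfl

private lemma cut_subset_incident (Y : Set V) : cutEdges ends Y ⊆ incidentEdges ends Y := by
  intro e he
  rw [mem_cutEdges] at he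
  obtain ⟨u, w, hew, hu, hw⟩ := he
  rw [mem_incidentEdges]
  exact ⟨u, by rw [hew]; exact Sym2.mem_mk_left u w, hu⟩

private lemma comp_cut_subset {Y : Set V} (hY : IsCompOf ends X Y) :
    cutEdges ends Y ⊆ cutEdges ends X := by
  intro e he
  rw [mem_cutEdges] at he ⊢
  obtain ⟨p, q, hepq, hp, hq⟩ := he
  have hpX : p ∉ X := hY.not_mem_X hp
  have hqX : q ∈ X := by
    by_contra hqX
    exact hq (by rw [hY.eq_compOf hp]; exact edge_step hepq hpX hqX)
  exact ⟨q, p, hepq.trans Sym2.eq_swap, hqX, hpX⟩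

private lemma cut_exists_comp {e : E} (he : e ∈ cutEdges ends X) :
    ∃ Y, IsCompOf ends X Y ∧ e ∈ cutEdges ends Y := by
  rw [mem_cutEdges] at he
  obtain ⟨u, y, hey, hu, hy⟩ := he
  refine ⟨compOf ends X y, isCompOf_compOf hy, ?_⟩
  rw [mem_cutEdges]
  exact ⟨y, u, hey.trans Sym2.eq_swap, mem_compOf_self y,
    fun hu' => (compOf_subset_notX hy hu') hu⟩

private lemma not_inside_exists_comp {e : E} (he : e ∉ insideEdges ends X) :
    ∃ Y, IsCompOf ends X Y ∧ e ∈ incidentEdges ends Y := by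
  rw [mem_insideEdges] at he
  push_neg at he
  obtain ⟨v, hv_mem, hv⟩ := he
  exact ⟨compOf ends X v, isCompOf_compOf hv,
    mem_incidentEdges.mpr ⟨v, hv_mem, mem_compOf_self v⟩⟩

private lemma incident_comp_not_inside {Y : Set V} (hY : IsCompOf ends X Y) {e : E}
    (he : e ∈ incidentEdges ends Y) : e ∉ insideEdges ends X := by
  rw [mem_incidentEdges] at he
  obtain ⟨v, hve, hv⟩ := he
  rw [mem_insideEdges]
  push_neg
  exact ⟨v, hve, hY.not_mem_X hv⟩

private lemma exists_crossing_edge {Y : Set V} {u w : V}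
    (h : Relation.ReflTransGen (Adj ends) u w) : u ∈ Y → w ∉ Y →
      ∃ e, Crossing Y (ends e) := by
  induction h with
  | refl => intro h1 h2; exact absurd h1 h2
  | @tail c w huc hcw ih =>
    intro hu hw
    by_cases hc : c ∈ Y
    · obtain ⟨e, he⟩ := hcw
      exact ⟨e, by rw [he]; exact (crossing_mk_iff Y c w).mpr (Or.inl ⟨hc, hw⟩)⟩
    · exact ih hu hc

private lemma comp_cut_nonempty (hconn : Connected ends) {Y : Set V}
    (hY : IsCompOf ends X Y) {b : V} (hbX : b ∈ X) : (cutEdges ends Y).Nonempty := by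
  have hY' := hY
  obtain ⟨y, hy, hYeq⟩ := hY'
  have hyY : y ∈ Y := by rw [hYeq]; exact mem_compOf_self y
  have hbY : b ∉ Y := fun h => hY.not_mem_X h hbX
  obtain ⟨e, he⟩ := exists_crossing_edge (hconn y b) hyY hbY
  exact ⟨e, mem_cutEdges.mpr he⟩

end Comp

/-! #### Partition summation helpers -/

private lemma sum_partition {ι M : Type} [AddCommMonoid M] (s : Finset ι) (f : ι → Finset E)
    (F : Finset E) (g : E → M)
    (huniq : ∀ e ∈ F, ∃! i, i ∈ s ∧ e ∈ f i) (hsub : ∀ i ∈ s, f i ⊆ F) :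
    ∑ i ∈ s, ∑ e ∈ f i, g e = ∑ e ∈ F, g e := by
  classical
  have h1 : ∀ i ∈ s, ∑ e ∈ f i, g e = ∑ e ∈ F, if e ∈ f i then g e else 0 := by
    intro i hi
    rw [Finset.sum_ite_mem, Finset.inter_eq_right.mpr (hsub i hi)]
  rw [Finset.sum_congr rfl h1, Finset.sum_comm]
  refine Finset.sum_congr rfl fun e he => ?_
  obtain ⟨i₀, ⟨hi₀s, hi₀f⟩, huni⟩ := huniq e he
  rw [Finset.sum_eq_single_of_mem i₀ hi₀s]
  · rw [if_pos hi₀f]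
  · intro j hj hne
    rw [if_neg]
    exact fun hef => hne (huni j ⟨hj, hef⟩)

private lemma card_partition {ι : Type} (s : Finset ι) (f : ι → Finset E) (F : Finset E)
    (huniq : ∀ e ∈ F, ∃! i, i ∈ s ∧ e ∈ f i) (hsub : ∀ i ∈ s, f i ⊆ F) :
    ∑ i ∈ s, (f i).card = F.card := by
  simp only [Finset.card_eq_sum_ones]
  exact sum_partition s f F (fun _ => (1 : ℕ)) huniq hsub

private lemma nz_partition {ι : Type} (γ : E → ZMod 2) (s : Finset ι) (f : ι → Finset E)
    (F : Finset E) (huniq : ∀ e ∈ F, ∃! i, i ∈ s ∧ e ∈ f i) (hsub : ∀ i ∈ s, f i ⊆ F) :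
    ∑ i ∈ s, nzCount γ (f i) = nzCount γ F := by
  classical
  have hn : ∀ t : Finset E, nzCount γ t = ∑ e ∈ t, if γ e = 1 then (1 : ℕ) else 0 := by
    intro t; rw [nzCount, Finset.card_filter]
  simp_rw [hn]
  exact sum_partition s f F _ huniq hsub

private lemma sum_div_two {ι : Type} (s : Finset ι) (c : ι → ℕ) (h : ∀ i ∈ s, 2 ∣ c i) :
    ∑ i ∈ s, c i / 2 = (∑ i ∈ s, c i) / 2 := by
  have h2 : ∑ i ∈ s, c i = 2 * ∑ i ∈ s, (c i / 2) := by
    rw [Finset.mul_sum]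
    exact Finset.sum_congr rfl fun i hi => (Nat.mul_div_cancel' (h i hi)).symm
  rw [h2, Nat.mul_div_cancel_left _ (by norm_num)]

/-! #### A circuit meeting a component must cross its cut -/

private lemma chain_side_head {p : V → Prop} :
    ∀ (a : E × V × V) (r : List (E × V × V)),
      (a :: r).Chain' (fun d d' => d.2.2 = d'.2.1) →
      (∀ d ∈ a :: r, (p d.2.1 ↔ p d.2.2)) →
      ∀ d ∈ a :: r, (p d.2.1 ↔ p a.2.1)
  | a, [], _, _ => by
    intro d hd
    rw [List.mem_singleton] at hd
    rw [hd]
  | a, a' :: r, h, hp => by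
    obtain ⟨h1, h2⟩ := List.isChain_cons_cons.mp h
    have ih := chain_side_head a' r h2 (fun d hd => hp d (List.mem_cons_of_mem a hd))
    intro d hd
    rcases List.mem_cons.mp hd with h' | hd'
    · rw [h']
    · calc p d.2.1 ↔ p a'.2.1 := ih d hd'
        _ ↔ p a.2.2 := by rw [h1]
        _ ↔ p a.2.1 := (hp a List.mem_cons_self).symm

private lemma circuit_crosses {X : Set V} (C : Circuit ends) {Y : Set V}
    (hY : IsCompOf ends X Y) {b : V} (hbX : b ∈ X) (hits : C.Hits b)
    (hinc : (C.edges ∩ incidentEdges ends Y).Nonempty) :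
    (C.edges ∩ cutEdges ends Y).Nonempty := by
  rw [Finset.nonempty_iff_ne_empty]
  intro hemp
  have hnc : ∀ d ∈ C.darts, (d.2.1 ∈ Y ↔ d.2.2 ∈ Y) := by
    intro d hd
    have hne : d.1 ∈ C.edges := by
      rw [Circuit.edges, List.mem_toFinset]
      exact List.mem_map_of_mem hd
    have hnc' : d.1 ∉ cutEdges ends Y := by
      intro hc
      have hmem : d.1 ∈ C.edges ∩ cutEdges ends Y := Finset.mem_inter.mpr ⟨hne, hc⟩
      rw [hemp] at hmem
      exact absurd hmem (Finset.notMem_empty _)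
    rw [mem_cutEdges, C.valid d hd, crossing_mk_iff] at hnc'
    tauto
  obtain ⟨e₀, he₀⟩ := hinc
  rw [Finset.mem_inter] at he₀
  obtain ⟨he₀c, he₀i⟩ := he₀
  rw [mem_incidentEdges] at he₀i
  obtain ⟨v, hv_e, hvY⟩ := he₀i
  rw [Circuit.edges, List.mem_toFinset, List.mem_map] at he₀c
  obtain ⟨d₀, hd₀, hd₀e⟩ := he₀c
  obtain ⟨db, hdb, hdbv⟩ := hits
  have hbY : b ∉ Y := fun h => hY.not_mem_X h hbX
  rw [← hd₀e, C.valid d₀ hd₀, Sym2.mem_iff] at hv_e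
  have hd₀Y : d₀.2.1 ∈ Y := by
    rcases hv_e with h | h
    · rw [← h]; exact hvY
    · exact (hnc d₀ hd₀).mpr (by rw [← h]; exact hvY)
  have hdbY : db.2.1 ∉ Y := by
    rcases hdbv with h | h
    · rw [h]; exact hbY
    · intro hc
      exact hbY (by rw [← h]; exact (hnc db hdb).mp hc)
  obtain ⟨a, r, hlist⟩ : ∃ a r, C.darts = a :: r := by
    cases hD : C.darts with
    | nil => exact absurd hD C.nonempty
    | cons a r => exact ⟨a, r, rfl⟩
  have hchain := C.chain
  rw [hlist] at hchain hnc hd₀ hdb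
  have hside := chain_side_head a r hchain hnc
  exact hdbY ((hside db hdb).mpr ((hside d₀ hd₀).mp hd₀Y))

/-! #### Handshake parity: every cut in an even graph is even -/

private lemma even_cut_card (hdeg : ∀ v : V, Even (degree ends v)) (W : Set V) :
    2 ∣ (cutEdges ends W).card := by
  classical
  rw [← even_iff_two_dvd, even_iff_zmod2]
  have key : ((cutEdges ends W).card : ZMod 2)
      = ∑ v ∈ Finset.univ.filter (fun v => v ∈ W), (degree ends v : ZMod 2) := by
    rw [cutEdges, Finset.card_filter]
    push_cast
    simp only [degree]
    push_cast
    rw [Finset.sum_comm]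
    refine Finset.sum_congr rfl fun e _ => ?_
    obtain ⟨p, q, hpq⟩ := sym2_exists_rep (ends e)
    rw [hpq]
    by_cases hloop : p = q
    · subst hloop
      rw [if_neg (by rw [crossing_mk_iff]; rintro (⟨h1, h2⟩ | ⟨h1, h2⟩) <;> exact h2 h1)]
      symm
      refine Finset.sum_eq_zero fun v hv => ?_
      by_cases hv' : s(p, p) = s(v, v)
      · rw [if_pos hv']; decide
      · rw [if_neg hv',
          if_neg (by rw [Sym2.mem_iff]; rintro (rfl | rfl) <;> exact hv' rfl)]
    · have hnl : ∀ v : V, s(p, q) ≠ s(v, v) := by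
        intro v h
        rw [Sym2.eq_iff] at h
        rcases h with ⟨rfl, rfl⟩ | ⟨rfl, rfl⟩ <;> exact hloop rfl
      have hterm : ∀ v : V, (if s(p, q) = s(v, v) then (2 : ZMod 2)
            else if v ∈ s(p, q) then 1 else 0)
          = (if v = p then (1 : ZMod 2) else 0) + (if v = q then 1 else 0) := by
        intro v
        rw [if_neg (hnl v)]
        simp only [Sym2.mem_iff]
        by_cases h1 : v = p <;> by_cases h2 : v = q
        · exact absurd (h1.symm.trans h2) hloop
        · subst h1; rw [if_pos (Or.inl rfl), if_pos rfl, if_neg h2, add_zero]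
        · subst h2; rw [if_pos (Or.inr rfl), if_neg h1, if_pos rfl, zero_add]
        · rw [if_neg (by tauto), if_neg h1, if_neg h2, add_zero]
      simp only [hterm]
      rw [Finset.sum_add_distrib, Finset.sum_ite_eq' (Finset.univ.filter (fun v => v ∈ W)) p
        (fun _ => (1 : ZMod 2)), Finset.sum_ite_eq' (Finset.univ.filter (fun v => v ∈ W)) q
        (fun _ => (1 : ZMod 2))]
      simp only [Finset.mem_filter, Finset.mem_univ, true_and]
      by_cases hp : p ∈ W <;> by_cases hq : q ∈ W <;>
        rw [crossing_mk_iff] <;> simp [hp, hq] <;> decide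
  rw [key]
  refine Finset.sum_eq_zero fun v _ => ?_
  exact (even_iff_zmod2 _).mp (hdeg v)

/-! #### The per-circuit counting inequality -/

private lemma circuit_bound {X : Set V} {b : V} (hbX : b ∈ X) (C : Circuit ends)
    (γ' : E → ZMod 2) (hw : C.weight γ' = 1) (hits : C.Hits b) :
    1 + ((Finset.univ.filter (fun Y : Set V => IsCompOf ends X Y)).filter
        (fun Y => ¬ Even ((C.edges ∩ cutEdges ends Y).card / 2
          + nzCount γ' (C.edges ∩ incidentEdges ends Y)))).card
      ≤ (C.edges ∩ cutEdges ends X).card / 2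
        + nzCount γ' (C.edges ∩ insideEdges ends X) := by
  classical
  set Comps := Finset.univ.filter (fun Y : Set V => IsCompOf ends X Y) with hComps
  set T := Comps.filter (fun Y => (C.edges ∩ incidentEdges ends Y).Nonempty) with hTdef
  set M := Comps.filter (fun Y => ¬ Even ((C.edges ∩ cutEdges ends Y).card / 2
    + nzCount γ' (C.edges ∩ incidentEdges ends Y))) with hMdef
  have hCompsOf : ∀ Y ∈ Comps, IsCompOf ends X Y := fun Y hY => (Finset.mem_filter.mp hY).2
  have hTsub : ∀ Y ∈ T, IsCompOf ends X Y := fun Y hY =>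
    hCompsOf Y (Finset.mem_filter.mp hY).1
  have hMT : M ⊆ T := by
    intro Y hY
    rw [hMdef, Finset.mem_filter] at hY
    rw [hTdef, Finset.mem_filter]
    refine ⟨hY.1, ?_⟩
    rw [Finset.nonempty_iff_ne_empty]
    intro hempty
    apply hY.2
    have hsubc : C.edges ∩ cutEdges ends Y ⊆ C.edges ∩ incidentEdges ends Y :=
      Finset.inter_subset_inter (Finset.Subset.refl _) (cut_subset_incident Y)
    rw [hempty, Finset.subset_empty] at hsubc
    rw [hsubc, hempty]
    simp [nzCount]
  have hevenY : ∀ Y : Set V, 2 ∣ (C.edges ∩ cutEdges ends Y).card :=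
    fun Y => circuit_cross_even C Y
  have hAcard : ∑ Y ∈ T, (C.edges ∩ cutEdges ends Y).card
      = (C.edges ∩ cutEdges ends X).card := by
    refine card_partition T _ _ ?_ ?_
    · intro e he
      have he' := Finset.mem_inter.mp he
      obtain ⟨Y, hYc, heY⟩ := cut_exists_comp he'.2
      have heYi : e ∈ incidentEdges ends Y := cut_subset_incident Y heY
      have hYT : Y ∈ T := by
        rw [hTdef, Finset.mem_filter]
        exact ⟨Finset.mem_filter.mpr ⟨Finset.mem_univ _, hYc⟩,
          ⟨e, Finset.mem_inter.mpr ⟨he'.1, heYi⟩⟩⟩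
      refine ⟨Y, ⟨hYT, Finset.mem_inter.mpr ⟨he'.1, heY⟩⟩, ?_⟩
      rintro Z ⟨hZT, heZ⟩
      have heZ' := Finset.mem_inter.mp heZ
      exact comp_unique (hTsub Z hZT) hYc (cut_subset_incident Z heZ'.2) heYi
    · intro Y hYT
      exact Finset.inter_subset_inter (Finset.Subset.refl _)
        (comp_cut_subset (hTsub Y hYT))
  have hAdiv : ∑ Y ∈ T, (C.edges ∩ cutEdges ends Y).card / 2
      = (C.edges ∩ cutEdges ends X).card / 2 := by
    rw [sum_div_two _ _ (fun Y _ => hevenY Y), hAcard]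
  have hF1 : ∀ Y ∈ T, 1 ≤ (C.edges ∩ cutEdges ends Y).card / 2 := by
    intro Y hYT
    have hYT' := Finset.mem_filter.mp hYT
    have hne := circuit_crosses C (hTsub Y hYT) hbX hits hYT'.2
    have h2 := hevenY Y
    have h3 := Finset.card_pos.mpr hne
    omega
  have hTA : T.card ≤ (C.edges ∩ cutEdges ends X).card / 2 := by
    rw [← hAdiv]
    calc T.card = ∑ _Y ∈ T, 1 := by rw [Finset.sum_const, smul_eq_mul, mul_one]
      _ ≤ _ := Finset.sum_le_sum hF1
  set n := nzCount γ' (C.edges ∩ insideEdges ends X) with hndef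
  have huq : ∀ e ∈ C.edges \ insideEdges ends X,
      ∃! Y, Y ∈ T ∧ e ∈ C.edges ∩ incidentEdges ends Y := by
    intro e he
    rw [Finset.mem_sdiff] at he
    obtain ⟨Y, hYc, heY⟩ := not_inside_exists_comp he.2
    have hYT : Y ∈ T := Finset.mem_filter.mpr
      ⟨Finset.mem_filter.mpr ⟨Finset.mem_univ _, hYc⟩,
        ⟨e, Finset.mem_inter.mpr ⟨he.1, heY⟩⟩⟩
    refine ⟨Y, ⟨hYT, Finset.mem_inter.mpr ⟨he.1, heY⟩⟩, ?_⟩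
    rintro Z ⟨hZT, heZ⟩
    exact comp_unique (hTsub Z hZT) hYc (Finset.mem_inter.mp heZ).2 heY
  have hsb : ∀ Y ∈ T, C.edges ∩ incidentEdges ends Y ⊆ C.edges \ insideEdges ends X := by
    intro Y hYT e he
    have he' := Finset.mem_inter.mp he
    exact Finset.mem_sdiff.mpr ⟨he'.1, incident_comp_not_inside (hTsub Y hYT) he'.2⟩
  have hsplit : (1 : ZMod 2) = (n : ZMod 2)
      + ∑ Y ∈ T, (nzCount γ' (C.edges ∩ incidentEdges ends Y) : ZMod 2) := by
    rw [← hw, weight_eq_sum]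
    rw [← Finset.sum_inter_add_sum_sdiff C.edges (insideEdges ends X) γ']
    congr 1
    · rw [hndef, nzCount_cast]
    · have hpart := sum_partition T (fun Y => C.edges ∩ incidentEdges ends Y)
        (C.edges \ insideEdges ends X) γ' huq hsb
      rw [← hpart]
      exact Finset.sum_congr rfl fun Y _ => (nzCount_cast γ' _).symm
  by_cases hn1 : 1 ≤ n
  · have hMc : M.card ≤ T.card := Finset.card_le_card hMT
    omega
  · have hn0 : n = 0 := by omega
    by_cases hMTeq : M = T
    · have hw0 : ∑ Y ∈ T, (nzCount γ' (C.edges ∩ incidentEdges ends Y) : ZMod 2) = 1 := by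
        rw [hn0] at hsplit
        simpa using hsplit.symm
      have hterm : ∀ Y ∈ T, (((C.edges ∩ cutEdges ends Y).card / 2 : ℕ) : ZMod 2)
          = 1 + (nzCount γ' (C.edges ∩ incidentEdges ends Y) : ZMod 2) := by
        intro Y hYT
        rw [← hMTeq, hMdef, Finset.mem_filter] at hYT
        have hodd := hYT.2
        rw [not_even_iff_zmod2] at hodd
        push_cast at hodd
        linear_combination hodd - CharTwo.add_self_eq_zero
          ((nzCount γ' (C.edges ∩ incidentEdges ends Y) : ZMod 2))
      have hAT : (((C.edges ∩ cutEdges ends X).card / 2 : ℕ) : ZMod 2)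
          = (T.card : ZMod 2) + 1 := by
        rw [← hAdiv]
        push_cast
        rw [Finset.sum_congr rfl hterm, Finset.sum_add_distrib, hw0,
          Finset.sum_const]
        simp [nsmul_eq_mul]
      have hne2 : (C.edges ∩ cutEdges ends X).card / 2 ≠ T.card := by
        intro heq
        rw [heq] at hAT
        exact (one_ne_zero : (1 : ZMod 2) ≠ 0) (by linear_combination - hAT)
      have hMcard : M.card = T.card := by rw [hMTeq]
      omega
    · have hss : M ⊂ T := ssubset_of_subset_of_ne hMT hMTeq
      have hlt := Finset.card_lt_card hss
      omega

/-! #### From a decomposition to the global bound -/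

private lemma decomp_uniq {k : ℕ} {C : Fin k → Circuit ends} (hdec : IsDecomposition ends C)
    (F : Finset E) :
    ∀ e ∈ F, ∃! i, i ∈ (Finset.univ : Finset (Fin k)) ∧ e ∈ (C i).edges ∩ F := by
  intro e he
  obtain ⟨i, hi, hu⟩ := hdec e
  exact ⟨i, ⟨Finset.mem_univ i, Finset.mem_inter.mpr ⟨hi, he⟩⟩,
    fun j hj => hu j (Finset.mem_inter.mp hj.2).1⟩

private lemma odd_comp_exists_circuit {k : ℕ} {C : Fin k → Circuit ends}
    (hdec : IsDecomposition ends C) (γ' : E → ZMod 2) {Y : Set V}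
    (hodd : OddSet ends γ' Y) :
    ∃ i, ¬ Even (((C i).edges ∩ cutEdges ends Y).card / 2
      + nzCount γ' ((C i).edges ∩ incidentEdges ends Y)) := by
  classical
  by_contra h
  push_neg at h
  have hcut : ∑ i, ((C i).edges ∩ cutEdges ends Y).card = (cutEdges ends Y).card :=
    card_partition Finset.univ _ _ (decomp_uniq hdec _) (fun i _ => Finset.inter_subset_right)
  have heven : ∀ i : Fin k, 2 ∣ ((C i).edges ∩ cutEdges ends Y).card :=
    fun i => circuit_cross_even (C i) Y
  have hdiv : ∑ i, ((C i).edges ∩ cutEdges ends Y).card / 2 = (cutEdges ends Y).card / 2 := by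
    rw [sum_div_two _ _ (fun i _ => heven i), hcut]
  have hnz : ∑ i, nzCount γ' ((C i).edges ∩ incidentEdges ends Y)
      = nzCount γ' (incidentEdges ends Y) :=
    nz_partition γ' Finset.univ _ _ (decomp_uniq hdec _) (fun i _ => Finset.inter_subset_right)
  have hev : Even ((cutEdges ends Y).card / 2 + nzCount γ' (incidentEdges ends Y)) := by
    rw [← hdiv, ← hnz, ← Finset.sum_add_distrib]
    exact Finset.even_sum _ (fun i _ => h i)
  rw [OddSet] at hodd
  obtain ⟨t, ht⟩ := hev
  omega

private lemma oddComponents_eq (γ' : E → ZMod 2) (X : Set V) :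
    oddComponents ends γ' X = ((Finset.univ : Finset (Set V)).filter
      (fun Y => IsCompOf ends X Y ∧ OddSet ends γ' Y)).card := by
  classical
  rw [oddComponents, Set.ncard_eq_toFinset_card', Set.toFinset_setOf]

private lemma decomposition_bound {b : V} {X : Set V} (hbX : b ∈ X) {k : ℕ}
    {C : Fin k → Circuit ends} (γ' : E → ZMod 2) (hdec : IsDecomposition ends C)
    (hw : ∀ i, (C i).weight γ' = 1) (hhit : ∀ i, (C i).Hits b) :
    k + oddComponents ends γ' X
      ≤ (cutEdges ends X).card / 2 + nzCount γ' (insideEdges ends X) := by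
  classical
  have hper : ∀ i ∈ (Finset.univ : Finset (Fin k)),
      1 + ((Finset.univ.filter (fun Y : Set V => IsCompOf ends X Y)).filter
        (fun Y => ¬ Even (((C i).edges ∩ cutEdges ends Y).card / 2
          + nzCount γ' ((C i).edges ∩ incidentEdges ends Y)))).card
      ≤ ((C i).edges ∩ cutEdges ends X).card / 2
        + nzCount γ' ((C i).edges ∩ insideEdges ends X) :=
    fun i _ => circuit_bound hbX (C i) γ' (hw i) (hhit i)
  have hsum := Finset.sum_le_sum hper
  rw [Finset.sum_add_distrib, Finset.sum_add_distrib, Finset.sum_const, smul_eq_mul,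
    mul_one, Finset.card_univ, Fintype.card_fin] at hsum
  have hA : ∑ i, ((C i).edges ∩ cutEdges ends X).card / 2 = (cutEdges ends X).card / 2 := by
    rw [sum_div_two _ _ (fun i _ => circuit_cross_even (C i) X),
      card_partition Finset.univ _ _ (decomp_uniq hdec _) (fun i _ => Finset.inter_subset_right)]
  have hnz : ∑ i, nzCount γ' ((C i).edges ∩ insideEdges ends X)
      = nzCount γ' (insideEdges ends X) :=
    nz_partition γ' Finset.univ _ _ (decomp_uniq hdec _) (fun i _ => Finset.inter_subset_right)
  rw [hA, hnz] at hsum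
  have hO : oddComponents ends γ' X
      ≤ ∑ i, ((Finset.univ.filter (fun Y : Set V => IsCompOf ends X Y)).filter
        (fun Y => ¬ Even (((C i).edges ∩ cutEdges ends Y).card / 2
          + nzCount γ' ((C i).edges ∩ incidentEdges ends Y)))).card := by
    rw [oddComponents_eq]
    refine le_trans (Finset.card_le_card ?_) (Finset.card_biUnion_le)
    intro Y hY
    rw [Finset.mem_filter] at hY
    obtain ⟨i, hi⟩ := odd_comp_exists_circuit hdec γ' hY.2.2
    rw [Finset.mem_biUnion]
    exact ⟨i, Finset.mem_univ i, Finset.mem_filter.mpr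
      ⟨Finset.mem_filter.mpr ⟨Finset.mem_univ _, hY.2.1⟩, hi⟩⟩
  omega

private lemma decomposition_card_le {k : ℕ} {C : Fin k → Circuit ends}
    (hdec : IsDecomposition ends C) : k ≤ Fintype.card E := by
  classical
  have hchoice : ∀ i : Fin k, ∃ e, e ∈ (C i).edges := by
    intro i
    cases hD : (C i).darts with
    | nil => exact absurd hD (C i).nonempty
    | cons d r =>
      exact ⟨d.1, by
        rw [Circuit.edges, List.mem_toFinset, hD]
        exact List.mem_map_of_mem List.mem_cons_self⟩
  choose f hf using hchoice
  have hinj : Function.Injective f := by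
    intro i j hij
    obtain ⟨w, _, hw2⟩ := hdec (f i)
    exact (hw2 i (hf i)).trans (hw2 j (hij ▸ hf j)).symm
  simpa using Fintype.card_le_of_injective f hinj

private lemma odd_le_half_cut (hE : IsEulerian ends) {b : V} {X : Set V} (hbX : b ∈ X)
    (γ' : E → ZMod 2) :
    oddComponents ends γ' X ≤ (cutEdges ends X).card / 2 := by
  classical
  rw [oddComponents_eq]
  set OddF := ((Finset.univ : Finset (Set V)).filter
    (fun Y => IsCompOf ends X Y ∧ OddSet ends γ' Y)) with hOddF
  set CompsF := ((Finset.univ : Finset (Set V)).filter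
    (fun Y => IsCompOf ends X Y)) with hCompsF
  have hsub : OddF ⊆ CompsF := by
    intro Y hY
    rw [hOddF, Finset.mem_filter] at hY
    exact Finset.mem_filter.mpr ⟨hY.1, hY.2.1⟩
  have h1 : ∀ Y ∈ CompsF, 1 ≤ (cutEdges ends Y).card / 2 := by
    intro Y hY
    have hYc := (Finset.mem_filter.mp hY).2
    have heven := even_cut_card hE.2 Y
    have hne := Finset.card_pos.mpr (comp_cut_nonempty hE.1 hYc hbX)
    omega
  calc OddF.card = ∑ _Y ∈ OddF, 1 := by rw [Finset.sum_const, smul_eq_mul, mul_one]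
    _ ≤ ∑ Y ∈ OddF, (cutEdges ends Y).card / 2 :=
        Finset.sum_le_sum (fun Y hY => h1 Y (hsub hY))
    _ ≤ ∑ Y ∈ CompsF, (cutEdges ends Y).card / 2 :=
        Finset.sum_le_sum_of_subset hsub
    _ ≤ (∑ Y ∈ CompsF, (cutEdges ends Y).card) / 2 := by
        rw [Nat.le_div_iff_mul_le (by norm_num), Finset.sum_mul]
        exact Finset.sum_le_sum (fun Y _ => Nat.div_mul_le_self _ _)
    _ = (cutEdges ends X).card / 2 := by
        rw [card_partition CompsF (cutEdges ends) _ ?_ ?_]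
        · intro e he
          obtain ⟨Y, hYc, heY⟩ := cut_exists_comp he
          refine ⟨Y, ⟨Finset.mem_filter.mpr ⟨Finset.mem_univ _, hYc⟩, heY⟩, ?_⟩
          rintro Z ⟨hZc, heZ⟩
          exact comp_unique ((Finset.mem_filter.mp hZc).2) hYc
            (cut_subset_incident Z heZ) (cut_subset_incident Y heY)
        · intro Y hY
          exact comp_cut_subset (Finset.mem_filter.mp hY).2

end Aux

/-- the easy direction of the min-max theorem. -/
theorem flooding_upper_bound (ends : E → Sym2 V) (γ γ' : E → ZMod 2) (b : V)
    (hE : IsEulerian ends) (hsh : IsShifting ends γ γ')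
    (X : Set V) (hb : b ∈ X) :
    (floodingNumber ends γ b : ℤ) ≤
      (nzCount γ' (insideEdges ends X) : ℤ) + ((cutEdges ends X).card / 2 : ℕ)
        - (oddComponents ends γ' X : ℤ) := by
  classical
  have hOhalf := odd_le_half_cut hE hb γ'
  have hrfl : floodingNumber ends γ b = sSup {k : ℕ | ∃ C : Fin k → Circuit ends,
      IsDecomposition ends C ∧ ∀ i, (C i).weight γ = 1 ∧ (C i).Hits b} := rfl
  set S : Set ℕ := {k : ℕ | ∃ C : Fin k → Circuit ends,
      IsDecomposition ends C ∧ ∀ i, (C i).weight γ = 1 ∧ (C i).Hits b} with hS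
  have hbdd : BddAbove S := by
    refine ⟨Fintype.card E, fun k hk => ?_⟩
    obtain ⟨C, hdec, _⟩ := hk
    exact decomposition_card_le hdec
  rcases Set.eq_empty_or_nonempty S with hSe | hSne
  · rw [hrfl, hSe, csSup_empty]
    simp only [Nat.bot_eq_zero]
    push_cast
    omega
  · have hmem := Nat.sSup_mem hSne hbdd
    obtain ⟨C, hdec, hprop⟩ := hmem
    have hw' : ∀ i, (C i).weight γ' = 1 := fun i => by
      rw [weight_shifting (C i) hsh]; exact (hprop i).1
    have hbound := decomposition_bound hb γ' hdec hw' (fun i => (hprop i).2)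
    rw [hrfl]
    push_cast
    omega

end SignedFlood
end

section
/- Let (G, γ, b) be an RES-graph, and suppose an optimal flooding C contains at least one non-zero circuit. Then there exists a partition of E(G) into circuits, each non-zero and hitting b, whose size equals the number of non-zero circuits in C. (Each zero circuit of a flooding can be merged into a non-zero circuit at the root b.) -/
open scoped Classical

namespace SignedFlood

variable {V E : Type} [Fintype V] [DecidableEq V] [Fintype E] [DecidableEq E]

set_option linter.unusedSectionVars false

section JoinAux

variable {ends : E → Sym2 V} {b : V}

lemma Circuit.basedAt_last {C : Circuit ends} (h : C.BasedAt b) :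
    C.darts.getLast?.map (fun d => d.2.2) = some b := by
  rw [← C.closed]; exact h

lemma Circuit.BasedAt.hits {C : Circuit ends} (h : C.BasedAt b) : C.Hits b := by
  obtain ⟨d, hd, hdb⟩ := Option.map_eq_some_iff.mp h
  exact ⟨d, List.mem_of_mem_head? (Option.mem_def.mpr hd), Or.inl hdb⟩

lemma flatten_darts_ne_nil {L : List (Circuit ends)} (hL : L ≠ []) :
    (L.map Circuit.darts).flatten ≠ [] := by
  intro h
  rw [List.flatten_eq_nil_iff] at h
  match L, hL with
  | c :: L', _ => exact c.nonempty (h c.darts (by simp))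

lemma head?_flatten_darts {L : List (Circuit ends)} (hL : L ≠ [])
    (hb : ∀ c ∈ L, c.BasedAt b) :
    ((L.map Circuit.darts).flatten).head?.map (fun d => d.2.1) = some b := by
  match L with
  | c :: L' =>
    simp only [List.map_cons, List.flatten_cons, List.head?_append]
    obtain ⟨d, hd, hdb⟩ := Option.map_eq_some_iff.mp (hb c (by simp))
    rw [hd]
    simp [hdb]

lemma getLast?_flatten_darts {L : List (Circuit ends)} (hL : L ≠ [])
    (hb : ∀ c ∈ L, c.BasedAt b) :
    ((L.map Circuit.darts).flatten).getLast?.map (fun d => d.2.2) = some b := by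
  induction L with
  | nil => exact absurd rfl hL
  | cons c L' ih =>
    simp only [List.map_cons, List.flatten_cons, List.getLast?_append]
    by_cases h' : L' = []
    · subst h'
      simpa using Circuit.basedAt_last (hb c (by simp))
    · have := ih h' (fun c hc => hb c (List.mem_cons_of_mem _ hc))
      obtain ⟨d, hd, hdb⟩ := Option.map_eq_some_iff.mp this
      rw [hd]
      simp [hdb]

lemma chain'_flatten_darts {L : List (Circuit ends)} (hb : ∀ c ∈ L, c.BasedAt b) :
    ((L.map Circuit.darts).flatten).Chain' (fun d d' => d.2.2 = d'.2.1) := by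
  induction L with
  | nil => exact List.isChain_nil
  | cons c L' ih =>
    simp only [List.map_cons, List.flatten_cons]
    refine List.IsChain.append (c.chain) (ih (fun c hc => hb c (List.mem_cons_of_mem _ hc))) ?_
    intro x hx y hy
    have hx' := Circuit.basedAt_last (hb c (by simp))
    rw [Option.mem_def.mp hx] at hx'
    have hL' : L' ≠ [] := by
      intro h; subst h; simp at hy
    have hy' := head?_flatten_darts hL' (fun c hc => hb c (List.mem_cons_of_mem _ hc))
    rw [Option.mem_def.mp hy] at hy'
    simp only [Option.map_some, Option.some.injEq] at hx' hy'
    rw [hx', hy']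

/-- Join a nonempty list of edge-disjoint circuits all based at `b` into one circuit. -/
noncomputable def joinCircuits (L : List (Circuit ends)) (hL : L ≠ [])
    (hb : ∀ c ∈ L, c.BasedAt b)
    (hnd : (((L.map Circuit.darts).flatten).map Prod.fst).Nodup) : Circuit ends where
  darts := (L.map Circuit.darts).flatten
  nonempty := flatten_darts_ne_nil hL
  valid := by
    intro d hd
    rw [List.mem_flatten] at hd
    obtain ⟨l, hl, hdl⟩ := hd
    rw [List.mem_map] at hl
    obtain ⟨c, hc, rfl⟩ := hl
    exact c.valid d hdl
  chain := chain'_flatten_darts hb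
  closed := by rw [head?_flatten_darts hL hb, getLast?_flatten_darts hL hb]
  edgesNodup := hnd

lemma joinCircuits_basedAt (L : List (Circuit ends)) (hL : L ≠ [])
    (hb : ∀ c ∈ L, c.BasedAt b) (hnd) :
    (joinCircuits L hL hb hnd).BasedAt b :=
  head?_flatten_darts hL hb

lemma joinCircuits_weight (γ : E → ZMod 2) (L : List (Circuit ends)) (hL : L ≠ [])
    (hb : ∀ c ∈ L, c.BasedAt b) (hnd) :
    (joinCircuits L hL hb hnd).weight γ = (L.map (fun c => c.weight γ)).sum := by
  simp only [joinCircuits, Circuit.weight, List.map_flatten, List.sum_flatten,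
    List.map_map]
  refine congrArg List.sum (List.map_congr_left fun c _ => ?_)
  simp [List.map_map, Function.comp]

lemma mem_joinCircuits_edges (e : E) (L : List (Circuit ends)) (hL : L ≠ [])
    (hb : ∀ c ∈ L, c.BasedAt b) (hnd) :
    e ∈ (joinCircuits L hL hb hnd).edges ↔ ∃ c ∈ L, e ∈ c.edges := by
  simp only [joinCircuits, Circuit.edges, List.mem_toFinset, List.mem_map,
    List.mem_flatten]
  constructor
  · rintro ⟨d, ⟨l, ⟨c, hc, rfl⟩, hdl⟩, rfl⟩
    exact ⟨c, hc, d, hdl, rfl⟩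
  · rintro ⟨c, hc, d, hd, rfl⟩
    exact ⟨d, ⟨c.darts, ⟨c, hc, rfl⟩, hd⟩, rfl⟩

end JoinAux

/-- from an optimal flooding with at least one non-zero circuit one gets
a decomposition into non-zero circuits hitting `b`, of size the number of non-zero
circuits in the flooding. -/
theorem optimal_flooding_to_decomposition (ends : E → Sym2 V) (γ : E → ZMod 2) (b : V)
    (hE : IsEulerian ends) {k : ℕ} (C : Fin k → Circuit ends)
    (hopt : IsOptimalFlooding ends γ b C)
    (hpos : 0 < nonzeroCount ends γ C) :
    ∃ D : Fin (nonzeroCount ends γ C) → Circuit ends,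
      IsDecomposition ends D ∧ ∀ i, (D i).weight γ = 1 ∧ (D i).Hits b := by
  obtain ⟨⟨hk, hdec, hbase⟩, -⟩ := hopt
  set S : Finset (Fin k) := Finset.univ.filter (fun i => (C i).weight γ = 1) with hSdef
  have hcard : nonzeroCount ends γ C = S.card := rfl
  have hSne : S.Nonempty := Finset.card_pos.mp (hcard ▸ hpos)
  obtain ⟨i0, hi0⟩ := hSne
  have hi0w : (C i0).weight γ = 1 := (Finset.mem_filter.mp hi0).2
  have hSw : ∀ i ∈ S, (C i).weight γ = 1 := fun i hi => (Finset.mem_filter.mp hi).2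
  set Z : List (Fin k) := (Finset.univ.filter (fun i => ¬ (C i).weight γ = 1)).toList
    with hZdef
  have hZmem : ∀ i, i ∈ Z ↔ ¬ (C i).weight γ = 1 := by intro i; simp [hZdef]
  have hZnd : Z.Nodup := Finset.nodup_toList _
  let eqv : Fin (nonzeroCount ends γ C) ≃ {x // x ∈ S} :=
    (finCongr hcard).trans S.equivFin.symm
  let idx : Fin (nonzeroCount ends γ C) → Fin k := fun j => (eqv j).1
  have idx_inj : Function.Injective idx := fun a b h => eqv.injective (Subtype.ext h)
  have idx_w : ∀ j, (C (idx j)).weight γ = 1 := fun j => hSw _ (eqv j).2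
  let Lidx : Fin (nonzeroCount ends γ C) → List (Fin k) :=
    fun j => if idx j = i0 then i0 :: Z else [idx j]
  have hLne : ∀ j, Lidx j ≠ [] := by
    intro j; simp only [Lidx]; split <;> simp
  have hLnd : ∀ j, (Lidx j).Nodup := by
    intro j; simp only [Lidx]; split
    · exact List.nodup_cons.mpr ⟨fun h => (hZmem i0).mp h hi0w, hZnd⟩
    · simp
  have hdisj : ∀ i i' : Fin k, i ≠ i' →
      ((C i).darts.map Prod.fst).Disjoint ((C i').darts.map Prod.fst) := by
    intro i i' hne e he he'
    have h1 : e ∈ (C i).edges := List.mem_toFinset.mpr he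
    have h2 : e ∈ (C i').edges := List.mem_toFinset.mpr he'
    obtain ⟨u, -, hu⟩ := hdec e
    exact hne ((hu i h1).trans (hu i' h2).symm)
  have hnodup : ∀ j, ((((Lidx j).map C).map Circuit.darts).flatten.map Prod.fst).Nodup := by
    intro j
    rw [List.map_flatten, List.map_map, List.map_map, List.nodup_flatten]
    constructor
    · intro l hl
      obtain ⟨i, -, rfl⟩ := List.mem_map.mp hl
      exact (C i).edgesNodup
    · rw [List.pairwise_map]
      exact (hLnd j).imp (fun h => hdisj _ _ h)
  have hbasedL : ∀ j, ∀ c ∈ (Lidx j).map C, c.BasedAt b := by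
    intro j c hc
    obtain ⟨i, -, rfl⟩ := List.mem_map.mp hc
    exact hbase i
  have hmapne : ∀ j, (Lidx j).map C ≠ [] := by
    intro j h; apply hLne j; simpa using h
  have hmemD : ∀ j e,
      e ∈ (joinCircuits ((Lidx j).map C) (hmapne j) (hbasedL j) (hnodup j)).edges ↔
        ∃ i ∈ Lidx j, e ∈ (C i).edges := by
    intro j e
    rw [mem_joinCircuits_edges]
    constructor
    · rintro ⟨c, hc, hec⟩
      obtain ⟨i, hi, rfl⟩ := List.mem_map.mp hc
      exact ⟨i, hi, hec⟩
    · rintro ⟨i, hi, hei⟩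
      exact ⟨C i, List.mem_map_of_mem hi, hei⟩
  let jfor : Fin k → Fin (nonzeroCount ends γ C) :=
    fun i => eqv.symm ⟨if h : (C i).weight γ = 1 then i else i0, by
      split
      · exact Finset.mem_filter.mpr ⟨Finset.mem_univ _, ‹_›⟩
      · exact hi0⟩
  have hidx_jfor : ∀ i, idx (jfor i) = if (C i).weight γ = 1 then i else i0 := by
    intro i
    simp only [idx, jfor, Equiv.apply_symm_apply]
    split <;> rfl
  have hkey : ∀ i j, i ∈ Lidx j ↔ j = jfor i := by
    intro i j
    have hiff : (j = jfor i) ↔ idx j = (if (C i).weight γ = 1 then i else i0) := by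
      rw [← hidx_jfor i]
      exact ⟨fun h => h ▸ rfl, fun h => idx_inj h⟩
    rw [hiff]
    simp only [Lidx]
    by_cases h0 : idx j = i0
    · rw [if_pos h0]
      simp only [List.mem_cons]
      by_cases hw : (C i).weight γ = 1
      · rw [if_pos hw]
        constructor
        · rintro (rfl | hz)
          · exact h0
          · exact absurd hw ((hZmem i).mp hz)
        · intro h; left; rw [← h, h0]
      · rw [if_neg hw]
        exact ⟨fun _ => h0, fun _ => Or.inr ((hZmem i).mpr hw)⟩
    · rw [if_neg h0]
      simp only [List.mem_singleton]
      by_cases hw : (C i).weight γ = 1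
      · rw [if_pos hw]
        exact ⟨fun h => h.symm, fun h => h.symm⟩
      · rw [if_neg hw]
        constructor
        · intro h; rw [h] at hw; exact absurd (idx_w j) hw
        · intro h; exact absurd h h0
  refine ⟨fun j => joinCircuits ((Lidx j).map C) (hmapne j) (hbasedL j) (hnodup j), ?_, ?_⟩
  · intro e
    obtain ⟨ie, hie, hu⟩ := hdec e
    refine ⟨jfor ie, (hmemD _ e).mpr ⟨ie, (hkey ie (jfor ie)).mpr rfl, hie⟩, ?_⟩
    intro j hj
    obtain ⟨i, hij, hei⟩ := (hmemD j e).mp hj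
    have hiie : i = ie := hu i hei
    rw [← hiie]
    exact (hkey i j).mp hij
  · intro j
    constructor
    · rw [joinCircuits_weight, List.map_map]
      simp only [Lidx]
      split
      · rw [List.map_cons, List.sum_cons]
        have hz : (Z.map ((fun c => Circuit.weight γ c) ∘ C)).sum = 0 := by
          apply List.sum_eq_zero
          intro x hx
          obtain ⟨i, hi, rfl⟩ := List.mem_map.mp hx
          have hne : (C i).weight γ ≠ 1 := (hZmem i).mp hi
          have h2 : ∀ x : ZMod 2, x ≠ 1 → x = 0 := by decide
          exact h2 _ hne
        rw [hz]
        simpa using hi0w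
      · simpa using idx_w j
    · exact (joinCircuits_basedAt _ _ _ _).hits

end SignedFlood
end

section
/- Let (G, γ, b) be an RES-graph and let T₀, S₀, T₁, S₁ be trails such that (T₀, S₀) and (T₁, S₁) are edge-disjoint circuits with b as tail and head, each of weight zero, with γ(T₀) = 0, γ(T₁) = 1, and T₀ and T₁ having the same head vertex. Then the circuits (T₀, T₁⁻¹) and (S₀⁻¹, S₁) are both non-zero and together use exactly the same edge set as (T₀, S₀) and (T₁, S₁). -/
open scoped Classical

namespace SignedFlood

variable {V E : Type} [Fintype V] [DecidableEq V] [Fintype E] [DecidableEq E]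

/-- A trail: a walk with no repeated edges. -/
structure Trail {V E : Type} (ends : E → Sym2 V) where
  darts : List (E × V × V)
  nonempty : darts ≠ []
  valid : ∀ d ∈ darts, ends d.1 = s(d.2.1, d.2.2)
  chain : darts.Chain' (fun d d' => d.2.2 = d'.2.1)
  edgesNodup : (darts.map Prod.fst).Nodup

/-- The weight of a trail. -/
def Trail.weight {ends : E → Sym2 V} (γ : E → ZMod 2) (T : Trail ends) : ZMod 2 :=
  ((T.darts.map Prod.fst).map γ).sum

/-- Reverse a list of darts. -/
def revDarts (l : List (E × V × V)) : List (E × V × V) :=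
  (l.map (fun d => (d.1, d.2.2, d.2.1))).reverse


section Helpers
variable {V E : Type}

lemma head?_append_left {α} {l l' : List α} (h : l ≠ []) : (l ++ l').head? = l.head? := by
  cases l with
  | nil => exact absurd rfl h
  | cons a t => simp

lemma getLast?_append_right {α} {l l' : List α} (h : l' ≠ []) :
    (l ++ l').getLast? = l'.getLast? := by
  rw [List.getLast?_append]
  obtain ⟨x, hx⟩ := Option.isSome_iff_exists.mp (List.getLast?_isSome.mpr h)
  simp [hx]

lemma revDarts_map_fst (l : List (E × V × V)) :
    (revDarts l).map Prod.fst = (l.map Prod.fst).reverse := by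
  simp [revDarts, List.map_reverse, Function.comp]

lemma revDarts_ne_nil {l : List (E × V × V)} (h : l ≠ []) : revDarts l ≠ [] := by
  simp [revDarts, h]

lemma revDarts_chain {l : List (E × V × V)}
    (h : l.Chain' (fun d d' => d.2.2 = d'.2.1)) :
    (revDarts l).Chain' (fun d d' => d.2.2 = d'.2.1) := by
  rw [revDarts, List.Chain', List.isChain_reverse, List.isChain_map]
  exact h.imp (fun a b hab => hab.symm)

lemma revDarts_head? (l : List (E × V × V)) :
    (revDarts l).head? = l.getLast?.map (fun d => (d.1, d.2.2, d.2.1)) := by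
  simp [revDarts, List.head?_reverse, List.getLast?_map]

lemma revDarts_getLast? (l : List (E × V × V)) :
    (revDarts l).getLast? = l.head?.map (fun d => (d.1, d.2.2, d.2.1)) := by
  simp [revDarts, List.getLast?_reverse, List.head?_map]

lemma revDarts_mem {l : List (E × V × V)} {d : E × V × V} (hd : d ∈ revDarts l) :
    ∃ d' ∈ l, d = (d'.1, d'.2.2, d'.2.1) := by
  simp only [revDarts, List.mem_reverse, List.mem_map] at hd
  obtain ⟨d', hd', rfl⟩ := hd
  exact ⟨d', hd', rfl⟩

lemma zmod2_add_eq_zero {x y : ZMod 2} (h : x + y = 0) : y = x := by revert h; revert x y; decide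

lemma nodup_of_coe_eq {α} {l m : List α} (h : (↑l : Multiset α) = ↑m) (hl : l.Nodup) :
    m.Nodup := by
  rw [← Multiset.coe_nodup] at hl ⊢; rwa [← h]

end Helpers

/-- the exchange at the common head of `T₀` and `T₁`: the circuits
`(T₀, T₁⁻¹)` and `(S₀⁻¹, S₁)` are non-zero and use the same edges as
`(T₀, S₀)` and `(T₁, S₁)`. -/
theorem exchange_nonzero (ends : E → Sym2 V) (γ : E → ZMod 2) (b : V)
    (T0 S0 T1 S1 : Trail ends)
    (hdisj : ((T0.darts ++ S0.darts ++ T1.darts ++ S1.darts).map Prod.fst).Nodup)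
    (hC0 : ∃ C : Circuit ends, C.darts = T0.darts ++ S0.darts ∧
      C.BasedAt b ∧ C.weight γ = 0)
    (hC1 : ∃ C : Circuit ends, C.darts = T1.darts ++ S1.darts ∧
      C.BasedAt b ∧ C.weight γ = 0)
    (hhead : (T0.darts.getLast?).map (fun d => d.2.2) =
      (T1.darts.getLast?).map (fun d => d.2.2))
    (hw0 : T0.weight γ = 0) (hw1 : T1.weight γ = 1) :
    ∃ (C1 C2 : Circuit ends),
      C1.darts = T0.darts ++ revDarts T1.darts ∧
      C2.darts = revDarts S0.darts ++ S1.darts ∧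
      C1.weight γ = 1 ∧ C2.weight γ = 1 ∧
      Disjoint C1.edges C2.edges ∧
      C1.edges ∪ C2.edges =
        ((T0.darts ++ S0.darts ++ T1.darts ++ S1.darts).map Prod.fst).toFinset := by
  classical
  obtain ⟨C0, hC0d, hC0b, hC0w⟩ := hC0
  obtain ⟨D1, hD1d, hD1b, hD1w⟩ := hC1
  have hT0 := T0.nonempty
  have hS0 := S0.nonempty
  have hT1 := T1.nonempty
  have hS1 := S1.nonempty
  -- abbreviations for edge lists
  set a := T0.darts.map Prod.fst with ha_def
  set s := S0.darts.map Prod.fst with hs_def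
  set t := T1.darts.map Prod.fst with ht_def
  set u := S1.darts.map Prod.fst with hu_def
  have hbig : ((T0.darts ++ S0.darts ++ T1.darts ++ S1.darts).map Prod.fst) =
      a ++ s ++ t ++ u := by simp [ha_def, hs_def, ht_def, hu_def]
  rw [hbig] at hdisj
  have hperm : ((a ++ t) ++ (s ++ u)).Nodup := by
    refine nodup_of_coe_eq ?_ hdisj
    simp only [← Multiset.coe_add]
    abel
  have hat : (a ++ t).Nodup := (List.nodup_append.mp hperm).1
  have hsu : (s ++ u).Nodup := (List.nodup_append.mp hperm).2.1
  have hdisj2 : (a ++ t).Disjoint (s ++ u) := (List.nodup_append'.mp hperm).2.2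
  have haN : a.Nodup := (List.nodup_append.mp hat).1
  have htN : t.Nodup := (List.nodup_append.mp hat).2.1
  have hatD : a.Disjoint t := (List.nodup_append'.mp hat).2.2
  have hsN : s.Nodup := (List.nodup_append.mp hsu).1
  have huN : u.Nodup := (List.nodup_append.mp hsu).2.1
  have hsuD : s.Disjoint u := (List.nodup_append'.mp hsu).2.2
  -- head / last facts
  have hb0 : T0.darts.head?.map (fun d => d.2.1) = some b := by
    have h := hC0b
    unfold Circuit.BasedAt at h
    rwa [hC0d, head?_append_left hT0] at h
  have hb1 : T1.darts.head?.map (fun d => d.2.1) = some b := by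
    have h := hD1b
    unfold Circuit.BasedAt at h
    rwa [hD1d, head?_append_left hT1] at h
  have hcl0 : S0.darts.getLast?.map (fun d => d.2.2) = some b := by
    have h := C0.closed
    rw [hC0d, head?_append_left hT0, getLast?_append_right hS0] at h
    rw [← h]
    exact hb0
  have hcl1 : S1.darts.getLast?.map (fun d => d.2.2) = some b := by
    have h := D1.closed
    rw [hD1d, head?_append_left hT1, getLast?_append_right hS1] at h
    rw [← h]
    exact hb1
  -- chains
  have hch0 : (T0.darts ++ S0.darts).Chain' (fun d d' => d.2.2 = d'.2.1) := by
    have h := C0.chain; rwa [hC0d] at h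
  have hch1 : (T1.darts ++ S1.darts).Chain' (fun d d' => d.2.2 = d'.2.1) := by
    have h := D1.chain; rwa [hD1d] at h
  rw [List.Chain', List.isChain_append] at hch0 hch1
  -- links at the common vertex
  obtain ⟨x0, hx0⟩ := Option.isSome_iff_exists.mp (List.getLast?_isSome.mpr hT0)
  obtain ⟨x1, hx1⟩ := Option.isSome_iff_exists.mp (List.getLast?_isSome.mpr hT1)
  obtain ⟨y0, hy0⟩ := Option.isSome_iff_exists.mp (List.isSome_head?.mpr hS0)
  obtain ⟨y1, hy1⟩ := Option.isSome_iff_exists.mp (List.isSome_head?.mpr hS1)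
  have hlink0 : x0.2.2 = y0.2.1 := hch0.2.2 x0 hx0 y0 hy0
  have hlink1 : x1.2.2 = y1.2.1 := hch1.2.2 x1 hx1 y1 hy1
  have hx0x1 : x0.2.2 = x1.2.2 := by
    rw [hx0, hx1] at hhead
    exact Option.some_injective _ hhead
  -- weights of S0 and S1
  have hwsum0 : T0.weight γ + S0.weight γ = 0 := by
    have h := hC0w
    unfold Circuit.weight at h
    rw [hC0d] at h
    simpa [Trail.weight, List.map_append, List.sum_append] using h
  have hwsum1 : T1.weight γ + S1.weight γ = 0 := by
    have h := hD1w
    unfold Circuit.weight at h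
    rw [hD1d] at h
    simpa [Trail.weight, List.map_append, List.sum_append] using h
  have hwS0 : S0.weight γ = 0 := by rw [zmod2_add_eq_zero hwsum0, hw0]
  have hwS1 : S1.weight γ = 1 := by rw [zmod2_add_eq_zero hwsum1, hw1]
  -- construct the first circuit
  refine ⟨⟨T0.darts ++ revDarts T1.darts, ?_, ?_, ?_, ?_, ?_⟩,
          ⟨revDarts S0.darts ++ S1.darts, ?_, ?_, ?_, ?_, ?_⟩,
          rfl, rfl, ?_, ?_, ?_, ?_⟩
  · simp [hT0]
  · intro d hd
    rcases List.mem_append.mp hd with h | h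
    · exact T0.valid d h
    · obtain ⟨d', hd', rfl⟩ := revDarts_mem h
      rw [T1.valid d' hd']
      exact Sym2.eq_swap
  · rw [List.Chain', List.isChain_append]
    refine ⟨T0.chain, revDarts_chain T1.chain, ?_⟩
    intro x hx y hy
    rw [hx0] at hx
    rw [revDarts_head?, hx1] at hy
    simp only [Option.map_some, Option.mem_def, Option.some.injEq] at hx hy
    subst hx; subst hy
    exact hx0x1
  · rw [head?_append_left hT0, getLast?_append_right (revDarts_ne_nil hT1),
      revDarts_getLast?]
    obtain ⟨z1, hz1⟩ := Option.isSome_iff_exists.mp (List.isSome_head?.mpr hT1)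
    rw [hz1] at hb1 ⊢
    simpa using hb0.trans hb1.symm
  · rw [List.map_append, revDarts_map_fst]
    rw [List.nodup_append']
    exact ⟨haN, by simpa using htN, fun e he he' => hatD he (List.mem_reverse.mp he')⟩
  -- second circuit
  · simp [revDarts_ne_nil hS0]
  · intro d hd
    rcases List.mem_append.mp hd with h | h
    · obtain ⟨d', hd', rfl⟩ := revDarts_mem h
      rw [S0.valid d' hd']
      exact Sym2.eq_swap
    · exact S1.valid d h
  · rw [List.Chain', List.isChain_append]
    refine ⟨revDarts_chain S0.chain, S1.chain, ?_⟩
    intro x hx y hy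
    rw [revDarts_getLast?, hy0] at hx
    rw [hy1] at hy
    simp only [Option.map_some, Option.mem_def, Option.some.injEq] at hx hy
    subst hx; subst hy
    show y0.2.1 = y1.2.1
    rw [← hlink0, ← hlink1]
    exact hx0x1
  · rw [head?_append_left (revDarts_ne_nil hS0), getLast?_append_right hS1,
      revDarts_head?]
    obtain ⟨z0, hz0⟩ := Option.isSome_iff_exists.mp (List.getLast?_isSome.mpr hS0)
    rw [hz0] at hcl0 ⊢
    simpa using hcl0.trans hcl1.symm
  · rw [List.map_append, revDarts_map_fst]
    rw [List.nodup_append']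
    exact ⟨by simpa using hsN, huN, fun e he he' => hsuD (List.mem_reverse.mp he) he'⟩
  -- weight C1
  · unfold Circuit.weight
    simp only [List.map_append, revDarts_map_fst, List.sum_append, List.map_reverse,
      List.sum_reverse]
    have : T0.weight γ + T1.weight γ = 1 := by rw [hw0, hw1]; ring
    simpa [Trail.weight] using this
  -- weight C2
  · unfold Circuit.weight
    simp only [List.map_append, revDarts_map_fst, List.sum_append, List.map_reverse,
      List.sum_reverse]
    have : S0.weight γ + S1.weight γ = 1 := by rw [hwS0, hwS1]; ring
    simpa [Trail.weight] using this
  -- disjoint edges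
  · unfold Circuit.edges
    rw [List.disjoint_toFinset_iff_disjoint]
    intro e he he'
    simp only [List.map_append, revDarts_map_fst, List.mem_append, List.mem_reverse] at he he'
    exact hdisj2 (List.mem_append.mpr (he.imp id id))
      (List.mem_append.mpr (he'.imp id id))
  -- union of edges
  · unfold Circuit.edges
    rw [hbig]
    simp only [List.map_append, revDarts_map_fst, List.toFinset_append, List.toFinset_reverse]
    ext e
    simp only [Finset.mem_union, List.mem_toFinset]
    tauto

end SignedFlood
end
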